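/- Let 1 < β₁ < β₂ and 1 ≤ k < n. Then the set Λ_{n,k}(β₁,β₂) of self-admissible words ω of length n realized as prefixes of ε(1,β) for some β ∈ (β₁,β₂] and satisfying ω_{t(ω)+1} = ⋯ = ω_{t(ω)+k} = 0 has cardinality at most β₂^{n-k+1}/(β₂ - 1). -/

import Mathlib

open Filter Topology

/-- The β-transformation `T_β x = βx - ⌊βx⌋`. -/
noncomputable def Tb (β : ℝ) (x : ℝ) : ℝ := β * x - ⌊β * x⌋

/-- The (n+1)-st digit `ε_{n+1}(x, β) = ⌊β T_β^{n} x⌋` of the β-expansion of `x`. -/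
noncomputable def digit (β : ℝ) (x : ℝ) (n : ℕ) : ℕ := (⌊β * (Tb β)^[n] x⌋).toNat

/-- Strict lexicographical order on sequences of naturals. -/
def lexLt (a b : ℕ → ℕ) : Prop := ∃ k, (∀ j, j < k → a j = b j) ∧ a k < b k

def lexLe (a b : ℕ → ℕ) : Prop := lexLt a b ∨ a = b

/-- A finite word padded with zeros to an infinite sequence. -/
def pad {n : ℕ} (ω : Fin n → ℕ) : ℕ → ℕ := fun k => if h : k < n then ω ⟨k, h⟩ else 0

/-- The prefix of length `m` of a padded word, again padded with zeros. -/
def trunc {n : ℕ} (ω : Fin n → ℕ) (m : ℕ) : ℕ → ℕ := fun k => if k < m then pad ω k else 0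

/-- A word `ω` of length `n` is self-admissible if `σ^i ω ≤_lex (ω_1, …, ω_{n-i})`
for all `1 ≤ i < n` (comparison after padding with zeros). -/
def selfAdmissible {n : ℕ} (ω : Fin n → ℕ) : Prop :=
  ∀ i, 1 ≤ i → i < n → lexLe (fun k => pad ω (k + i)) (trunc ω (n - i))

/-- Lexicographic order on words of the same length. -/
def wordLt {n : ℕ} (ω ω' : Fin n → ℕ) : Prop := lexLt (pad ω) (pad ω')

def wordLe {n : ℕ} (ω ω' : Fin n → ℕ) : Prop := wordLt ω ω' ∨ ω = ω'

/-- The recurrence time `τ(ω)`: the least `1 ≤ k < n` with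
`σ^k(ω_1,…,ω_n) = (ω_1,…,ω_{n-k})`, and `n` if there is no such `k`. -/
noncomputable def tau {n : ℕ} (ω : Fin n → ℕ) : ℕ :=
  sInf ({k | 1 ≤ k ∧ k < n ∧ ∀ j, j < n - k → pad ω (k + j) = pad ω j} ∪ {n})

/-- The cylinder of the word `ω` in the parameter space `(1, ∞)`. -/
def cylP (n : ℕ) (ω : Fin n → ℕ) : Set ℝ := {β : ℝ | 1 < β ∧ ∀ i : Fin n, digit β 1 i = ω i}

/-- The first `n` digits of the β-expansion of `1`. -/
noncomputable def prefixW (β : ℝ) (n : ℕ) : Fin n → ℕ := fun i => digit β 1 i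

/-- The `n`-th recurrence time `τ_n(β)` of `β`. -/
noncomputable def tauN (β : ℝ) (n : ℕ) : ℕ := tau (prefixW β n)

/-- `t_n(β) = n - ⌊n / τ_n(β)⌋ τ_n(β)`. -/
noncomputable def tN (β : ℝ) (n : ℕ) : ℕ := n - (n / tauN β n) * tauN β n

/-- Left endpoint `β̲_n` of the `n`-th cylinder of `β` in the parameter space. -/
noncomputable def lEnd (β : ℝ) (n : ℕ) : ℝ := sInf (cylP n (prefixW β n))

/-- Right endpoint `β̄_n` of the `n`-th cylinder of `β` in the parameter space. -/
noncomputable def rEnd (β : ℝ) (n : ℕ) : ℝ := sSup (cylP n (prefixW β n))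

/-- The set `Σ_β^n` of β-admissible words of length `n`. -/
def SigmaB (β : ℝ) (n : ℕ) : Set (Fin n → ℕ) :=
  {w | ∃ x : ℝ, 0 ≤ x ∧ x < 1 ∧ ∀ i : Fin n, digit β x i = w i}

open Classical in
/-- The infinite β-expansion `ε*(1, β)` of `1`. -/
noncomputable def epsStar (β : ℝ) : ℕ → ℕ :=
  if h : ∃ m, digit β 1 m ≠ 0 ∧ ∀ k, m < k → digit β 1 k = 0 then
    fun n =>
      if n % (h.choose + 1) = h.choose then digit β 1 h.choose - 1
      else digit β 1 (n % (h.choose + 1))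
  else digit β 1

/-- Words of length `n` realized as prefixes of `ε(1, β)` for some `β ∈ (β₁, β₂]`. -/
def LamN (β₁ β₂ : ℝ) (n : ℕ) : Set (Fin n → ℕ) :=
  {ω | ∃ β : ℝ, β₁ < β ∧ β ≤ β₂ ∧ ∀ i : Fin n, digit β 1 i = ω i}

/-- `t(ω) = n - ⌊n / τ(ω)⌋ τ(ω)`. -/
noncomputable def tW {n : ℕ} (ω : Fin n → ℕ) : ℕ := n - (n / tau ω) * tau ω

/-! ### Auxiliary development -/

section Aux

/-- lex is asymmetric. -/
lemma lexLt_not_lexLe {a b : ℕ → ℕ} (h : lexLt a b) (h' : lexLe b a) : False := by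
  obtain ⟨i, hai, hi⟩ := h
  rcases h' with ⟨i', hbi, hi'⟩ | rfl
  · rcases lt_trichotomy i i' with hc | rfl | hc
    · exact absurd (hbi i hc) (by omega)
    · omega
    · exact absurd (hai i' hc) (by omega)
  · omega

/-! #### basics on the β-transformation -/

lemma Tb_iter_nonneg {β : ℝ} (hβ : 0 ≤ β) {x : ℝ} (hx : 0 ≤ x) (j : ℕ) :
    0 ≤ (Tb β)^[j] x := by
  induction j with
  | zero => exact hx
  | succ j ih =>
    rw [Function.iterate_succ_apply']
    exact Int.fract_nonneg _

lemma Tb_iter_lt_one {β : ℝ} {x : ℝ} (hx : 0 ≤ x) {j : ℕ} (hj : 1 ≤ j) :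
    (Tb β)^[j] x < 1 := by
  obtain ⟨i, rfl⟩ : ∃ i, j = i + 1 := ⟨j - 1, by omega⟩
  rw [Function.iterate_succ_apply']
  exact Int.fract_lt_one _

lemma digit_cast {β : ℝ} (hβ : 0 ≤ β) {x : ℝ} (hx : 0 ≤ x) (j : ℕ) :
    (digit β x j : ℝ) = ⌊β * (Tb β)^[j] x⌋ := by
  have h0 : 0 ≤ β * (Tb β)^[j] x := mul_nonneg hβ (Tb_iter_nonneg hβ hx j)
  have h1 : (0 : ℤ) ≤ ⌊β * (Tb β)^[j] x⌋ := Int.floor_nonneg.mpr h0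
  rw [digit]
  exact_mod_cast congrArg (Int.cast : ℤ → ℝ) (Int.toNat_of_nonneg h1)

lemma Tb_iter_succ {β : ℝ} (hβ : 0 ≤ β) {x : ℝ} (hx : 0 ≤ x) (j : ℕ) :
    (Tb β)^[j + 1] x = β * (Tb β)^[j] x - digit β x j := by
  rw [Function.iterate_succ_apply', digit_cast hβ hx j]
  rfl

lemma digit_le {β : ℝ} (hβ : 0 < β) {x : ℝ} (hx : 0 ≤ x) (j : ℕ) :
    (digit β x j : ℝ) ≤ β * (Tb β)^[j] x := by
  rw [digit_cast hβ.le hx j]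
  exact Int.floor_le _

/-- The fundamental identity for partial sums of digits. -/
lemma sum_digits {β : ℝ} (hβ : 0 < β) {x : ℝ} (hx : 0 ≤ x) (a : ℕ) :
    ∀ b, a ≤ b →
      ∑ i ∈ Finset.Ico a b, (digit β x i : ℝ) * (β ^ (i + 1 - a))⁻¹
        = (Tb β)^[a] x - (Tb β)^[b] x * (β ^ (b - a))⁻¹ := by
  intro b hb
  induction b, hb using Nat.le_induction with
  | base => simp
  | succ b hb ih =>
    rw [Finset.sum_Ico_succ_top hb, ih, Tb_iter_succ hβ.le hx b]
    have e1 : b + 1 - a = (b - a) + 1 := by omega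
    have hβ0 : (β : ℝ) ≠ 0 := ne_of_gt hβ
    have hp : (β : ℝ) ^ (b - a) ≠ 0 := pow_ne_zero _ hβ0
    rw [e1, pow_succ, mul_inv]
    field_simp
    ring

/-- if the digits of `x` and `x'` agree below `j` then iterates differ by `β^j (x - x')`. -/
lemma Tb_iter_sub {β : ℝ} (hβ : 0 ≤ β) {x x' : ℝ} (hx : 0 ≤ x) (hx' : 0 ≤ x') (j : ℕ)
    (h : ∀ i, i < j → digit β x i = digit β x' i) :
    (Tb β)^[j] x - (Tb β)^[j] x' = β ^ j * (x - x') := by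
  induction j with
  | zero => simp
  | succ j ih =>
    have hih := ih (fun i hi => h i (hi.trans (Nat.lt_succ_self j)))
    rw [Tb_iter_succ hβ hx j, Tb_iter_succ hβ hx' j]
    have hdd : (digit β x j : ℝ) = digit β x' j := by
      exact_mod_cast congrArg (Nat.cast : ℕ → ℝ) (h j (Nat.lt_succ_self j))
    rw [pow_succ']
    nlinarith [hih, hdd]

/-- words in a cylinder are self-admissible, and start with a nonzero digit. -/
lemma selfAdmissible_of_digits {β : ℝ} (hβ : 1 < β) {n : ℕ} (ω : Fin n → ℕ)
    (hd : ∀ i : Fin n, digit β 1 i = ω i) : selfAdmissible ω := by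
  intro i h1i hin
  have hpad : ∀ p (hp : p < n), pad ω p = digit β 1 p := by
    intro p hp
    simp only [pad, dif_pos hp]
    exact (hd ⟨p, hp⟩).symm
  set x : ℝ := (Tb β)^[i] 1 with hxdef
  have hx0 : 0 ≤ x := Tb_iter_nonneg (by linarith) zero_le_one i
  have hx1 : x < 1 := Tb_iter_lt_one zero_le_one h1i
  have key : ∀ j, digit β 1 (j + i) = digit β x j := by
    intro j
    unfold digit
    rw [Function.iterate_add_apply]
  by_cases hall : ∀ j, j < n - i → digit β x j = digit β 1 j
  · right
    funext j
    simp only [trunc]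
    by_cases hj : j < n - i
    · rw [if_pos hj, hpad (j + i) (by omega), hpad j (by omega), key j, hall j hj]
    · rw [if_neg hj]
      simp only [pad, dif_neg (by omega : ¬ j + i < n)]
  · left
    push_neg at hall
    have hP : ∃ j, j < n - i ∧ digit β x j ≠ digit β 1 j := hall
    classical
    set j0 := Nat.find hP with hj0def
    obtain ⟨hj0lt, hj0ne⟩ := Nat.find_spec hP
    rw [← hj0def] at hj0lt hj0ne
    have hmin : ∀ j, j < j0 → digit β x j = digit β 1 j := by
      intro j hj
      by_contra hne
      exact Nat.find_min hP hj ⟨by omega, hne⟩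
    have hsub := Tb_iter_sub (by linarith : (0:ℝ) ≤ β) hx0 zero_le_one j0 hmin
    have hlt : (Tb β)^[j0] x < (Tb β)^[j0] 1 := by nlinarith [pow_pos (show (0:ℝ) < β by linarith) j0]
    have hdle : digit β x j0 ≤ digit β 1 j0 := by
      unfold digit
      exact Int.toNat_le_toNat (Int.floor_mono (by nlinarith))
    refine ⟨j0, ?_, ?_⟩
    · intro j hj
      show pad ω (j + i) = trunc ω (n - i) j
      rw [hpad (j + i) (by omega), key j]
      simp only [trunc, if_pos (show j < n - i by omega)]
      rw [hpad j (by omega), hmin j hj]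
    · show pad ω (j0 + i) < trunc ω (n - i) j0
      rw [hpad (j0 + i) (by omega), key j0]
      simp only [trunc, if_pos hj0lt]
      rw [hpad j0 (by omega)]
      omega

lemma pad_zero_ne {β : ℝ} (hβ : 1 < β) {n : ℕ} (hn : 0 < n) (ω : Fin n → ℕ)
    (hd : ∀ i : Fin n, digit β 1 i = ω i) : pad ω 0 ≠ 0 := by
  have : pad ω 0 = ω ⟨0, hn⟩ := by simp [pad, hn]
  rw [this, ← hd ⟨0, hn⟩]
  unfold digit
  simp only [Function.iterate_zero, id_eq, mul_one]
  have : (1 : ℤ) ≤ ⌊β⌋ := by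
    rw [Int.le_floor]
    exact_mod_cast hβ.le
  omega

/-! #### combinatorial facts about `tau`, `tW` -/

variable {n k : ℕ} (ω : Fin n → ℕ)

lemma tau_spec (hn : 0 < n) (h0 : pad ω 0 ≠ 0) (hk : 1 ≤ k)
    (hz : ∀ j, tW ω ≤ j → j < tW ω + k → pad ω j = 0) :
    1 ≤ tau ω ∧ tau ω < n ∧ ∀ j, j < n - tau ω → pad ω (tau ω + j) = pad ω j := by
  have hne : ({k | 1 ≤ k ∧ k < n ∧ ∀ j, j < n - k → pad ω (k + j) = pad ω j} ∪ {n} : Set ℕ).Nonempty :=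
    ⟨n, Or.inr rfl⟩
  have hmem := Nat.sInf_mem hne
  rw [show sInf ({k | 1 ≤ k ∧ k < n ∧ ∀ j, j < n - k → pad ω (k + j) = pad ω j} ∪ {n} : Set ℕ) = tau ω from rfl] at hmem
  rcases hmem with hA | hn'
  · exact ⟨hA.1, hA.2.1, hA.2.2⟩
  · exfalso
    have hτ : tau ω = n := hn'
    have htW : tW ω = 0 := by
      unfold tW
      rw [hτ, Nat.div_self hn, one_mul, Nat.sub_self]
    exact h0 (hz 0 (by omega) (by omega))

lemma tW_eq_mod : tau ω ≤ n → tW ω = n % tau ω := by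
  intro _
  unfold tW
  have h1 : n % tau ω + n / tau ω * tau ω = n := by
    rw [mul_comm]; exact Nat.mod_add_div n (tau ω)
  generalize n / tau ω * tau ω = q at h1 ⊢
  omega

lemma pad_mod (hτ : 1 ≤ tau ω) (hτn : tau ω < n)
    (hper : ∀ j, j < n - tau ω → pad ω (tau ω + j) = pad ω j) :
    ∀ p, p < n → pad ω p = pad ω (p % tau ω) := by
  intro p
  induction p using Nat.strong_induction_on with
  | _ p ih =>
    intro hp
    by_cases h : p < tau ω
    · rw [Nat.mod_eq_of_lt h]
    · have hτp : tau ω ≤ p := not_lt.mp h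
      have h1 : pad ω p = pad ω (p - tau ω) := by
        have := hper (p - tau ω) (by omega)
        rwa [show tau ω + (p - tau ω) = p by omega] at this
      have h2 := ih (p - tau ω) (by omega) (by omega)
      have h3 : (p - tau ω) % tau ω = p % tau ω := by
        conv_rhs => rw [show p = (p - tau ω) + tau ω by omega]
        rw [Nat.add_mod_right]
      rw [h1, h2, h3]

end Aux

section Count

/-- suffix value of a word in base β. -/
noncomputable def sval (β : ℝ) {m : ℕ} (w : Fin m → ℕ) (j : ℕ) : ℝ :=
  ∑ i ∈ Finset.Ico j m, (pad w i : ℝ) * (β ^ (i + 1 - j))⁻¹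

/-- the admissibility domain. -/
def Dset (β : ℝ) (m : ℕ) : Set (Fin m → ℕ) := {w | ∀ j, j < m → sval β w j < 1}

/-- Full words: every suffix value is at most `1 - β^{-(m-j)}`. -/
def Fullp (β : ℝ) {m : ℕ} (w : Fin m → ℕ) : Prop :=
  ∀ j, j ≤ m → sval β w j ≤ 1 - (β ^ (m - j))⁻¹

variable {β : ℝ} {m : ℕ}

lemma pad_lt {m : ℕ} (w : Fin m → ℕ) {i : ℕ} (hi : i < m) : pad w i = w ⟨i, hi⟩ := by
  simp [pad, hi]

lemma pad_ge {m : ℕ} (w : Fin m → ℕ) {i : ℕ} (hi : m ≤ i) : pad w i = 0 := by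
  simp [pad, not_lt.mpr hi]

lemma sval_nonneg (hβ : 0 < β) (w : Fin m → ℕ) (j : ℕ) : 0 ≤ sval β w j := by
  refine Finset.sum_nonneg fun i _ => ?_
  positivity

lemma sval_single (hβ : 0 < β) (w : Fin m → ℕ) {j : ℕ} (hj : j < m) :
    (pad w j : ℝ) * β⁻¹ ≤ sval β w j := by
  have h := Finset.single_le_sum (f := fun i => (pad w i : ℝ) * (β ^ (i + 1 - j))⁻¹)
    (fun i _ => by positivity) (Finset.mem_Ico.mpr ⟨le_refl j, hj⟩)
  unfold sval
  simpa using h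

lemma sval_last (w : Fin m → ℕ) : sval β w m = 0 := by
  simp [sval]

lemma sval_init (w : Fin (m + 1) → ℕ) {j : ℕ} (hj : j ≤ m) :
    sval β w j = sval β (Fin.init w) j + (w (Fin.last m) : ℝ) * (β ^ (m + 1 - j))⁻¹ := by
  unfold sval
  rw [Finset.sum_Ico_succ_top hj]
  congr 1
  · refine Finset.sum_congr rfl fun i hi => ?_
    obtain ⟨hji, him⟩ := Finset.mem_Ico.mp hi
    rw [pad_lt w (him.trans (Nat.lt_succ_self m)), pad_lt (Fin.init w) him]
    rfl
  · rw [pad_lt w (Nat.lt_succ_self m)]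
    rfl

lemma sval_step (hβ : 0 < β) (w : Fin m → ℕ) {j : ℕ} (hj : j < m) :
    sval β w j = ((pad w j : ℝ) + sval β w (j + 1)) * β⁻¹ := by
  unfold sval
  rw [Finset.sum_eq_sum_Ico_succ_bot hj]
  rw [add_mul, Finset.sum_mul]
  congr 1
  · norm_num
  · refine Finset.sum_congr rfl fun i hi => ?_
    obtain ⟨hji, him⟩ := Finset.mem_Ico.mp hi
    have e : i + 1 - j = (i + 1 - (j + 1)) + 1 := by omega
    rw [e, pow_succ, mul_inv, ← mul_assoc]

lemma sval_diff (hβ : 0 < β) (w w' : Fin m → ℕ) {j : ℕ} (hj : j ≤ m)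
    (hagree : ∀ i, i < j → pad w i = pad w' i) :
    sval β w 0 - sval β w' 0 = (β ^ j)⁻¹ * (sval β w j - sval β w' j) := by
  induction j with
  | zero => simp
  | succ j ih =>
    have hj' : j < m := hj
    rw [ih (le_of_lt hj') (fun i hi => hagree i (hi.trans (Nat.lt_succ_self j))),
      sval_step hβ w hj', sval_step hβ w' hj', hagree j (Nat.lt_succ_self j),
      pow_succ, mul_inv]
    ring

lemma sval_gap (hβ : 1 < β) {M : ℕ} (w w' : Fin M → ℕ) {j : ℕ} (hj : j < M)
    (hagree : ∀ i, i < j → pad w i = pad w' i) (hlt : pad w j < pad w' j)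
    (hfull : sval β w (j + 1) ≤ 1 - (β ^ (M - (j + 1)))⁻¹) :
    sval β w 0 + (β ^ M)⁻¹ ≤ sval β w' 0 := by
  have hβ0 : (0:ℝ) < β := by linarith
  have hd := sval_diff hβ0 w' w (le_of_lt hj) (fun i hi => (hagree i hi).symm)
  have hs := sval_step hβ0 w hj
  have hs' := sval_step hβ0 w' hj
  have hnn' : 0 ≤ sval β w' (j + 1) := sval_nonneg hβ0 w' _
  have h1 : (pad w j : ℝ) + 1 ≤ (pad w' j : ℝ) := by exact_mod_cast hlt
  have hstepge : sval β w' j - sval β w j ≥ ((β ^ (M - (j+1)))⁻¹) * β⁻¹ := by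
    rw [hs, hs']
    have hβinv : (0:ℝ) < β⁻¹ := by positivity
    have : (pad w' j : ℝ) + sval β w' (j+1) - ((pad w j : ℝ) + sval β w (j+1))
        ≥ (β ^ (M - (j+1)))⁻¹ := by
      have := hfull
      linarith
    calc ((pad w' j : ℝ) + sval β w' (j+1)) * β⁻¹ - ((pad w j : ℝ) + sval β w (j+1)) * β⁻¹
        = ((pad w' j : ℝ) + sval β w' (j+1) - ((pad w j : ℝ) + sval β w (j+1))) * β⁻¹ := by ring
      _ ≥ (β ^ (M - (j+1)))⁻¹ * β⁻¹ := by
          exact mul_le_mul_of_nonneg_right this hβinv.le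
  have hkey : (β ^ j)⁻¹ * ((β ^ (M - (j+1)))⁻¹ * β⁻¹) = (β ^ M)⁻¹ := by
    rw [← mul_inv, ← mul_inv, ← pow_succ, ← pow_add]
    congr 2
    omega
  have hj0 : (0:ℝ) < (β ^ j)⁻¹ := by positivity
  have := mul_le_mul_of_nonneg_left hstepge hj0.le
  rw [hkey] at this
  linarith [hd]

lemma Dset_finite (hβ : 1 < β) : (Dset β m).Finite := by
  have hβ0 : (0:ℝ) < β := by linarith
  refine Set.Finite.subset (Set.Finite.pi (fun _ : Fin m => Set.finite_Iic ⌊β⌋₊)) ?_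
  intro w hw
  intro i _
  have h1 := sval_single hβ0 w i.isLt
  have h2 := hw i.val i.isLt
  rw [pad_lt w i.isLt] at h1
  simp only [Set.mem_Iic]
  rw [Nat.le_floor_iff hβ0.le]
  have hβinv : (0:ℝ) < β⁻¹ := by positivity
  have : (w i : ℝ) * β⁻¹ < 1 := lt_of_le_of_lt h1 h2
  calc (w i : ℝ) = (w i : ℝ) * β⁻¹ * β := by field_simp
    _ ≤ 1 * β := by nlinarith
    _ = β := one_mul β

lemma Dset_card (hβ : 1 < β) (m : ℕ) :
    ((Dset β m).ncard : ℝ) ≤ ∑ i ∈ Finset.range (m + 1), β ^ i := by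
  have hβ0 : (0:ℝ) < β := by linarith
  induction m with
  | zero =>
    have h1 : (Dset β 0).ncard ≤ (Set.univ : Set (Fin 0 → ℕ)).ncard :=
      Set.ncard_le_ncard (Set.subset_univ _) Set.finite_univ
    rw [Set.ncard_univ, Nat.card_unique] at h1
    simpa using (by exact_mod_cast h1 : ((Dset β 0).ncard : ℝ) ≤ 1)
  | succ m ih =>
    classical
    set M := m + 1 with hM
    set F : Set (Fin M → ℕ) := Dset β M ∩ {w | Fullp β w} with hF
    set NF : Set (Fin M → ℕ) := Dset β M ∩ {w | ¬ Fullp β w} with hNF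
    have hsplit : Dset β M = F ∪ NF := by
      ext w; by_cases h : Fullp β w <;> simp [hF, hNF, h] <;> tauto
    have hFfin : F.Finite := (Dset_finite hβ).subset Set.inter_subset_left
    have hNFfin : NF.Finite := (Dset_finite hβ).subset Set.inter_subset_left
    -- full words are at most β^M
    have hFcard : (F.ncard : ℝ) ≤ β ^ M := by
      set φ : (Fin M → ℕ) → ℕ := fun w => ⌊β ^ M * sval β w 0⌋₊ with hφ
      set N : ℕ := ⌊β ^ M⌋₊ with hNdef
      have hmaps : ∀ w ∈ F, φ w ∈ (Finset.range N : Set ℕ) := by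
        rintro w ⟨hwD, hwF⟩
        have h0 := hwF 0 (Nat.zero_le M)
        simp only [Nat.sub_zero] at h0
        have hpM : (0:ℝ) < β ^ M := by positivity
        have hle : β ^ M * sval β w 0 ≤ β ^ M - 1 := by
          have := mul_le_mul_of_nonneg_left h0 hpM.le
          rw [mul_sub, mul_inv_cancel₀ (ne_of_gt hpM)] at this
          linarith
        have h1 : (φ w : ℝ) ≤ β ^ M - 1 :=
          le_trans (Nat.floor_le (mul_nonneg hpM.le (sval_nonneg hβ0 w 0))) hle
        have h2 : ((φ w + 1 : ℕ) : ℝ) ≤ β ^ M := by push_cast; linarith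
        have h3 : φ w + 1 ≤ N := Nat.le_floor h2
        simp only [Finset.coe_range, Set.mem_Iio]
        omega
      have hinj : Set.InjOn φ F := by
        rintro w ⟨hwD, hwF⟩ w' ⟨hwD', hwF'⟩ heq
        by_contra hne
        have hP : ∃ i, pad w i ≠ pad w' i := by
          obtain ⟨i, hi⟩ := Function.ne_iff.mp hne
          exact ⟨i.val, by rw [pad_lt w i.isLt, pad_lt w' i.isLt]; simpa using hi⟩
        set j := Nat.find hP with hjdef
        have hjne : pad w j ≠ pad w' j := Nat.find_spec hP
        have hjM : j < M := by
          by_contra hge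
          rw [pad_ge w (by omega), pad_ge w' (by omega)] at hjne
          exact hjne rfl
        have hagree : ∀ i, i < j → pad w i = pad w' i := by
          intro i hi
          by_contra hip
          exact Nat.find_min hP hi hip
        have key : ∀ (u u' : Fin M → ℕ), u ∈ F → u' ∈ F →
            (∀ i, i < j → pad u i = pad u' i) → pad u j < pad u' j → φ u < φ u' := by
          rintro u u' ⟨huD, huF⟩ ⟨huD', huF'⟩ hag hlt
          have hfull := huF (j + 1) (by omega)
          have hgap := sval_gap hβ u u' hjM hag hlt hfull
          have hpM : (0:ℝ) < β ^ M := by positivity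
          have h1 : β ^ M * sval β u 0 + 1 ≤ β ^ M * sval β u' 0 := by
            have := mul_le_mul_of_nonneg_left hgap hpM.le
            rw [mul_add, mul_inv_cancel₀ (ne_of_gt hpM)] at this
            linarith
          have h2 : ((φ u + 1 : ℕ) : ℝ) ≤ β ^ M * sval β u' 0 := by
            push_cast
            have := Nat.floor_le (mul_nonneg hpM.le (sval_nonneg hβ0 u 0))
            linarith
          have h3 : φ u + 1 ≤ φ u' := Nat.le_floor h2
          omega
        rcases lt_or_gt_of_ne hjne with hc | hc
        · exact absurd heq (ne_of_lt (key w w' ⟨hwD, hwF⟩ ⟨hwD', hwF'⟩ hagree hc))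
        · exact absurd heq.symm (ne_of_lt (key w' w ⟨hwD', hwF'⟩ ⟨hwD, hwF⟩
            (fun i hi => (hagree i hi).symm) hc))
      have h1 : F.ncard = (φ '' F).ncard := (Set.ncard_image_of_injOn hinj).symm
      have h2 : (φ '' F).ncard ≤ N := by
        have := Set.ncard_le_ncard (s := φ '' F) (t := (Finset.range N : Set ℕ))
          (by rintro x ⟨w, hw, rfl⟩; exact hmaps w hw) (Finset.range N).finite_toSet
        rwa [Set.ncard_coe_finset, Finset.card_range] at this
      have h3 : (N : ℝ) ≤ β ^ M := Nat.floor_le (by positivity)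
      calc (F.ncard : ℝ) = ((φ '' F).ncard : ℝ) := by rw [h1]
        _ ≤ N := by exact_mod_cast h2
        _ ≤ β ^ M := h3
    -- non-full words inject into words of length m
    have hNFcard : (NF.ncard : ℝ) ≤ ((Dset β m).ncard : ℝ) := by
      have hmaps : ∀ w ∈ NF, Fin.init w ∈ Dset β m := by
        rintro w ⟨hwD, _⟩ j hj
        have h1 := sval_init (β := β) w (le_of_lt hj)
        have h2 := hwD j (by omega)
        have h3 : (0:ℝ) ≤ (w (Fin.last m) : ℝ) * (β ^ (m + 1 - j))⁻¹ := by positivity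
        linarith
      have hinj : Set.InjOn Fin.init NF := by
        rintro w ⟨hwD, hwNF⟩ w' ⟨hwD', hwNF'⟩ heq
        simp only [Fullp, not_forall] at hwNF hwNF'
        obtain ⟨j₀, hj₀M, hj₀⟩ := hwNF
        obtain ⟨j₀', hj₀M', hj₀'⟩ := hwNF'
        push_neg at hj₀ hj₀'
        have hj₀m : j₀ ≤ m := by
          rcases Nat.lt_succ_iff_lt_or_eq.mp (Nat.lt_succ_of_le hj₀M) with h | h
          · omega
          · exfalso; rw [h, sval_last, Nat.sub_self, pow_zero, inv_one] at hj₀; linarith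
        have hj₀m' : j₀' ≤ m := by
          rcases Nat.lt_succ_iff_lt_or_eq.mp (Nat.lt_succ_of_le hj₀M') with h | h
          · omega
          · exfalso; rw [h, sval_last, Nat.sub_self, pow_zero, inv_one] at hj₀'; linarith
        set u := Fin.init w with hu
        set a := w (Fin.last m) with ha
        set a' := w' (Fin.last m) with ha'
        have hsv : ∀ j, j ≤ m → sval β w j = sval β u j + (a : ℝ) * (β ^ (M - j))⁻¹ :=
          fun j hj => sval_init w hj
        have hsv' : ∀ j, j ≤ m → sval β w' j = sval β u j + (a' : ℝ) * (β ^ (M - j))⁻¹ := by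
          intro j hj
          rw [sval_init w' hj, ← heq]
        have hbound : ∀ j, j ≤ m → (a : ℝ) * (β ^ (M - j))⁻¹ < 1 - sval β u j := by
          intro j hj
          have := hwD j (by omega)
          rw [hsv j hj] at this; linarith
        have hbound' : ∀ j, j ≤ m → (a' : ℝ) * (β ^ (M - j))⁻¹ < 1 - sval β u j := by
          intro j hj
          have := hwD' j (by omega)
          rw [hsv' j hj] at this; linarith
        have hlow : 1 - sval β u j₀ - (β ^ (M - j₀))⁻¹ < (a : ℝ) * (β ^ (M - j₀))⁻¹ := by
          rw [hsv j₀ hj₀m] at hj₀; linarith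
        have hlow' : 1 - sval β u j₀' - (β ^ (M - j₀'))⁻¹ < (a' : ℝ) * (β ^ (M - j₀'))⁻¹ := by
          rw [hsv' j₀' hj₀m'] at hj₀'; linarith
        -- conclude a = a'
        have haa : a = a' := by
          have c1 : (a : ℝ) < (a' : ℝ) + 1 := by
            have h1 := hbound j₀' hj₀m'
            have h2 := hlow'
            have hp : (0:ℝ) < (β ^ (M - j₀'))⁻¹ := by positivity
            have := lt_trans h1 (by linarith : 1 - sval β u j₀' < ((a' : ℝ) + 1) * (β ^ (M - j₀'))⁻¹)
            exact lt_of_mul_lt_mul_right (by linarith [this]) hp.le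
          have c2 : (a' : ℝ) < (a : ℝ) + 1 := by
            have h1 := hbound' j₀ hj₀m
            have h2 := hlow
            have hp : (0:ℝ) < (β ^ (M - j₀))⁻¹ := by positivity
            have := lt_trans h1 (by linarith : 1 - sval β u j₀ < ((a : ℝ) + 1) * (β ^ (M - j₀))⁻¹)
            exact lt_of_mul_lt_mul_right (by linarith [this]) hp.le
          have c1' : a < a' + 1 := by exact_mod_cast c1
          have c2' : a' < a + 1 := by exact_mod_cast c2
          omega
        have hIW : Fin.init w' = u := heq.symm
        rw [← Fin.snoc_init_self w, ← Fin.snoc_init_self w', hIW, ← hu, ← ha, ← ha', haa]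
      exact_mod_cast Set.ncard_le_ncard_of_injOn Fin.init hmaps hinj (Dset_finite hβ)
    have hunion : (Dset β M).ncard ≤ F.ncard + NF.ncard := by
      rw [hsplit]
      exact Set.ncard_union_le F NF
    rw [Finset.sum_range_succ]
    have : ((Dset β M).ncard : ℝ) ≤ (F.ncard : ℝ) + (NF.ncard : ℝ) := by exact_mod_cast hunion
    linarith [hFcard, hNFcard, ih]

end Count

section Inj

/-- squeeze map -/
noncomputable def sqz (n k : ℕ) (ω : Fin n → ℕ) : Fin (n - k) → ℕ :=
  fun i => if (i : ℕ) < tW ω then 0 else pad ω ((i : ℕ) + k)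

lemma sqz_inj_aux {n k : ℕ} (hk : 1 ≤ k) (hkn : k < n) (ω ϖ : Fin n → ℕ)
    (hsa : selfAdmissible ω) (hsa' : selfAdmissible ϖ)
    (h0 : pad ω 0 ≠ 0) (h0' : pad ϖ 0 ≠ 0)
    (hz : ∀ j, tW ω ≤ j → j < tW ω + k → pad ω j = 0)
    (hz' : ∀ j, tW ϖ ≤ j → j < tW ϖ + k → pad ϖ j = 0)
    (heq : sqz n k ω = sqz n k ϖ) (hle : tW ω ≤ tW ϖ) : ω = ϖ := by
  have hn : 0 < n := by omega
  set m := n - k with hm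
  set t := tW ω with ht
  set t' := tW ϖ with ht'
  set τ := tau ω with hτdef
  set τ' := tau ϖ with hτ'def
  obtain ⟨hτ1, hτn, hper⟩ := tau_spec ω hn h0 hk hz
  obtain ⟨hτ1', hτn', hper'⟩ := tau_spec ϖ hn h0' hk hz'
  have hmod := pad_mod ω hτ1 hτn hper
  have hmod' := pad_mod ϖ hτ1' hτn' hper'
  -- arithmetic facts
  have htmod : t = n % τ := tW_eq_mod ω (le_of_lt hτn)
  have htmod' : t' = n % τ' := tW_eq_mod ϖ (le_of_lt hτn')
  have httau : t < τ := by rw [htmod]; exact Nat.mod_lt n (by omega)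
  have httau' : t' < τ' := by rw [htmod']; exact Nat.mod_lt n (by omega)
  have hQ : n - t = n / τ * τ := by
    have h1 : n / τ * τ ≤ n := Nat.div_mul_le_self n τ
    have : t = n - n / τ * τ := rfl
    omega
  have hQ' : n - t' = n / τ' * τ' := by
    have h1 : n / τ' * τ' ≤ n := Nat.div_mul_le_self n τ'
    have : t' = n - n / τ' * τ' := rfl
    omega
  have hQτ : τ ≤ n - t := by
    have h1 : 1 ≤ n / τ := (Nat.one_le_div_iff (by omega)).mpr (le_of_lt hτn)
    have h2 : 1 * τ ≤ n / τ * τ := Nat.mul_le_mul_right τ h1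
    omega
  have hQτ' : τ' ≤ n - t' := by
    have h1 : 1 ≤ n / τ' := (Nat.one_le_div_iff (by omega)).mpr (le_of_lt hτn')
    have h2 : 1 * τ' ≤ n / τ' * τ' := Nat.mul_le_mul_right τ' h1
    omega
  -- if ω vanishes on [t, z) then z ≤ τ or z ≤ t
  have tau_ge : ∀ z, (∀ jj, t ≤ jj → jj < z → pad ω jj = 0) → z ≤ τ ∨ z ≤ t := by
    intro z hzz
    by_contra hcon
    push_neg at hcon
    obtain ⟨h1, h2⟩ := hcon
    have hz0 : pad ω τ = 0 := hzz τ (le_of_lt httau) h1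
    have : pad ω τ = pad ω 0 := by
      have := hmod τ hτn
      rwa [Nat.mod_self] at this
    exact h0 (this ▸ hz0)
  have tau_ge' : ∀ z, (∀ jj, t' ≤ jj → jj < z → pad ϖ jj = 0) → z ≤ τ' ∨ z ≤ t' := by
    intro z hzz
    by_contra hcon
    push_neg at hcon
    obtain ⟨h1, h2⟩ := hcon
    have hz0 : pad ϖ τ' = 0 := hzz τ' (le_of_lt httau') h1
    have : pad ϖ τ' = pad ϖ 0 := by
      have := hmod' τ' hτn'
      rwa [Nat.mod_self] at this
    exact h0' (this ▸ hz0)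
  have htk' : t' + k ≤ τ' := by
    rcases tau_ge' (t' + k) (fun jj h1 h2 => hz' jj h1 h2) with h | h
    · exact h
    · omega
  have ht'm : t' < m := by omega
  -- pointwise consequence of heq
  have hpt : ∀ i, i < m →
      (if i < t then 0 else pad ω (i + k)) = (if i < t' then 0 else pad ϖ (i + k)) := by
    intro i hi
    exact congrFun heq ⟨i, hi⟩
  -- agreement beyond t' + k
  have E1 : ∀ p, t' + k ≤ p → pad ω p = pad ϖ p := by
    intro p hp
    by_cases hpn : p < n
    · have hi : p - k < m := by omega
      have := hpt (p - k) hi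
      rw [if_neg (by omega), if_neg (by omega)] at this
      rwa [show p - k + k = p by omega] at this
    · rw [pad_ge ω (by omega), pad_ge ϖ (by omega)]
  -- ω vanishes on [t, t' + k)
  have E2 : ∀ jj, t ≤ jj → jj < t' + k → pad ω jj = 0 := by
    intro jj h1 h2
    by_cases hcase : jj < t + k
    · exact hz jj h1 hcase
    · have hi : jj - k < m := by omega
      have := hpt (jj - k) hi
      rw [if_neg (by omega), if_pos (by omega)] at this
      rwa [show jj - k + k = jj by omega] at this
  have hτz : t' + k ≤ τ := by
    rcases tau_ge (t' + k) E2 with h | h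
    · exact h
    · omega
  -- head = tail
  have head_tail : ∀ j, j < t → pad ω j = pad ω (n - t + j) := by
    intro j hj
    have hp : n - t + j < n := by omega
    have h1 := hmod (n - t + j) hp
    have h2 : (n - t + j) % τ = j := by
      rw [show n - t + j = j + n / τ * τ by omega, Nat.add_mul_mod_self_right]
      exact Nat.mod_eq_of_lt (by omega)
    rw [h1, h2]
  have head_tail' : ∀ j, j < t' → pad ϖ j = pad ϖ (n - t' + j) := by
    intro j hj
    have hp : n - t' + j < n := by omega
    have h1 := hmod' (n - t' + j) hp
    have h2 : (n - t' + j) % τ' = j := by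
      rw [show n - t' + j = j + n / τ' * τ' by omega, Nat.add_mul_mod_self_right]
      exact Nat.mod_eq_of_lt (by omega)
    rw [h1, h2]
  -- the main dichotomy
  have ext_of_heads : (∀ j, j < t' → pad ω j = pad ϖ j) → ω = ϖ := by
    intro hheads
    have main : ∀ j, j < n → pad ω j = pad ϖ j := by
      intro j hj
      rcases lt_or_ge j t' with h1 | h1
      · exact hheads j h1
      · rcases lt_or_ge j (t' + k) with h2 | h2
        · rw [E2 j (by omega) h2, hz' j h1 h2]
        · exact E1 j h2
    funext i
    have := main i.val i.isLt
    rwa [pad_lt ω i.isLt, pad_lt ϖ i.isLt] at this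
  rcases eq_or_lt_of_le hle with heqt | hlt
  · -- t = t' : recover the heads from the common tail
    refine ext_of_heads fun j hj => ?_
    have hjt : j < t := by omega
    calc pad ω j = pad ω (n - t + j) := head_tail j hjt
      _ = pad ϖ (n - t + j) := E1 _ (by omega)
      _ = pad ϖ j := by
          rw [show n - t + j = n - t' + j by omega]
          exact (head_tail' j (by omega)).symm
  · -- t < t' : use self-admissibility twice
    have hA := hsa (n - t') (by omega) (by omega)
    rw [show n - (n - t') = t' by omega] at hA
    have hF : ∀ j, pad ω (j + (n - t')) = (if j < t' then pad ϖ j else 0) := by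
      intro j
      by_cases hjt : j < t'
      · rw [if_pos hjt]
        have hp : t' + k ≤ j + (n - t') := by omega
        rw [E1 _ hp]
        have := head_tail' j hjt
        rw [show n - t' + j = j + (n - t') by omega] at this
        exact this.symm
      · rw [if_neg hjt, pad_ge ω (by omega)]
    rcases hA with hLt | hEq
    · -- strict inequality: the head of ϖ is lex-smaller than the head of ω
      obtain ⟨j0, hagree, hj0l⟩ := hLt
      have hj0 : (if j0 < t' then pad ϖ j0 else 0) < trunc ω t' j0 := by
        have h' : pad ω (j0 + (n - t')) < trunc ω t' j0 := hj0l
        rwa [hF j0] at h'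
      have hj0t' : j0 < t' := by
        by_contra hcon
        rw [if_neg hcon] at hj0
        simp only [trunc] at hj0
        rcases lt_or_ge j0 t' with h | h
        · omega
        · rw [if_neg (not_lt.mpr h)] at hj0; omega
      rw [if_pos hj0t'] at hj0
      simp only [trunc, if_pos hj0t'] at hj0
      -- hj0 : pad ϖ j0 < pad ω j0
      have hj0t : j0 < t := by
        by_contra hcon
        have := E2 j0 (by omega) (by omega)
        omega
      have hagree' : ∀ j, j < j0 → pad ϖ j = pad ω j := by
        intro j hjj
        have h' : pad ω (j + (n - t')) = trunc ω t' j := hagree j hjj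
        rw [hF j, if_pos (by omega : j < t')] at h'
        simpa [trunc, show j < t' by omega] using h'
      -- now use self-admissibility of ϖ at shift n - t
      exfalso
      have hB := hsa' (n - t) (by omega) (by omega)
      rw [show n - (n - t) = t by omega] at hB
      have hF' : (fun j => pad ϖ (j + (n - t))) = (fun j => if j < t then pad ω j else 0) := by
        funext j
        by_cases hjt : j < t
        · rw [if_pos hjt]
          have hp : t' + k ≤ j + (n - t) := by omega
          rw [← E1 _ hp]
          have := head_tail j hjt
          rw [show n - t + j = j + (n - t) by omega] at this
          exact this.symm
        · rw [if_neg hjt, pad_ge ϖ (by omega)]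
      rw [hF'] at hB
      have htrunc : trunc ϖ t = fun j => if j < t then pad ϖ j else 0 := rfl
      rw [htrunc] at hB
      refine lexLt_not_lexLe (a := fun j => if j < t then pad ϖ j else 0)
        (b := fun j => if j < t then pad ω j else 0) ⟨j0, ?_, ?_⟩ hB
      · intro j hjj
        show (if j < t then pad ϖ j else 0) = (if j < t then pad ω j else 0)
        have hjt : j < t := by omega
        rw [if_pos hjt, if_pos hjt]
        exact hagree' j hjj
      · show (if j0 < t then pad ϖ j0 else 0) < (if j0 < t then pad ω j0 else 0)
        rw [if_pos hj0t, if_pos hj0t]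
        exact hj0
    · -- equality: heads agree, so the words are equal
      refine ext_of_heads fun j hj => ?_
      have := congrFun hEq j
      rw [hF j, if_pos hj] at this
      simpa [trunc, hj] using this.symm

lemma sqz_mem {β β₂ : ℝ} (hβ : 1 < β) (hββ : β ≤ β₂) {n k : ℕ} (hk : 1 ≤ k) (hkn : k < n)
    (ω : Fin n → ℕ) (hd : ∀ i : Fin n, digit β 1 i = ω i) :
    sqz n k ω ∈ Dset β₂ (n - k) := by
  have hβ0 : (0:ℝ) < β := by linarith
  have hβ₂ : (1:ℝ) < β₂ := lt_of_lt_of_le hβ hββ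
  have hβ₂0 : (0:ℝ) < β₂ := by linarith
  set m := n - k with hm
  have hmk : m + k = n := by omega
  intro j hj
  set t := tW ω with ht
  set u := sqz n k ω with hu
  have hpadu : ∀ i, i < m → (pad u i) = if i < t then 0 else pad ω (i + k) := by
    intro i hi
    rw [pad_lt u hi]
    rfl
  set jt := max j t with hjt
  show sval β₂ u j < 1
  by_cases hcase : jt < m
  · have hsub : Finset.Ico jt m ⊆ Finset.Ico j m :=
      Finset.Ico_subset_Ico (le_max_left j t) le_rfl
    have step1 : sval β₂ u j = ∑ i ∈ Finset.Ico jt m, (pad u i : ℝ) * (β₂ ^ (i + 1 - j))⁻¹ := by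
      refine (Finset.sum_subset hsub ?_).symm
      intro i hi hni
      obtain ⟨h1, h2⟩ := Finset.mem_Ico.mp hi
      have hit : i < t := by
        simp only [Finset.mem_Ico, not_and, not_le] at hni
        omega
      rw [hpadu i h2, if_pos hit]
      simp
    set g : ℕ → ℝ := fun p => (digit β 1 p : ℝ) * (β ^ (p + 1 - (jt + k)))⁻¹ with hg
    have step2 : ∑ i ∈ Finset.Ico jt m, (pad u i : ℝ) * (β₂ ^ (i + 1 - j))⁻¹
        ≤ ∑ i ∈ Finset.Ico jt m, g (i + k) := by
      refine Finset.sum_le_sum fun i hi => ?_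
      obtain ⟨h1, h2⟩ := Finset.mem_Ico.mp hi
      have hik : i + k < n := by omega
      have hval : pad u i = digit β 1 (i + k) := by
        rw [hpadu i h2, if_neg (by omega : ¬ i < t), pad_lt ω hik]
        exact (hd ⟨i + k, hik⟩).symm
      rw [hval]
      show (digit β 1 (i + k) : ℝ) * (β₂ ^ (i + 1 - j))⁻¹
          ≤ (digit β 1 (i + k) : ℝ) * (β ^ (i + k + 1 - (jt + k)))⁻¹
      have hexp : i + k + 1 - (jt + k) = i + 1 - jt := by omega
      rw [hexp]
      refine mul_le_mul_of_nonneg_left ?_ (Nat.cast_nonneg _)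
      rw [inv_le_inv₀ (by positivity) (by positivity)]
      calc β ^ (i + 1 - jt) ≤ β₂ ^ (i + 1 - jt) :=
            pow_le_pow_left₀ hβ0.le hββ _
        _ ≤ β₂ ^ (i + 1 - j) := pow_le_pow_right₀ hβ₂.le (by omega)
    have step3 : ∑ i ∈ Finset.Ico jt m, g (i + k) = ∑ p ∈ Finset.Ico (jt + k) n, g p := by
      rw [Finset.sum_Ico_add' g jt m k, hmk]
    have step4 : ∑ p ∈ Finset.Ico (jt + k) n, g p
        = (Tb β)^[jt + k] 1 - (Tb β)^[n] 1 * (β ^ (n - (jt + k)))⁻¹ :=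
      sum_digits hβ0 zero_le_one (jt + k) n (by omega)
    have h5 : (0:ℝ) ≤ (Tb β)^[n] 1 * (β ^ (n - (jt + k)))⁻¹ := by
      have := Tb_iter_nonneg hβ0.le zero_le_one n
      positivity
    have h6 : (Tb β)^[jt + k] 1 < 1 := Tb_iter_lt_one zero_le_one (by omega)
    rw [step1]
    calc ∑ i ∈ Finset.Ico jt m, (pad u i : ℝ) * (β₂ ^ (i + 1 - j))⁻¹
        ≤ ∑ i ∈ Finset.Ico jt m, g (i + k) := step2
      _ = ∑ p ∈ Finset.Ico (jt + k) n, g p := step3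
      _ = (Tb β)^[jt + k] 1 - (Tb β)^[n] 1 * (β ^ (n - (jt + k)))⁻¹ := step4
      _ ≤ (Tb β)^[jt + k] 1 := by linarith
      _ < 1 := h6
  · have : sval β₂ u j = 0 := by
      refine Finset.sum_eq_zero fun i hi => ?_
      obtain ⟨h1, h2⟩ := Finset.mem_Ico.mp hi
      have hit : i < t := by omega
      rw [hpadu i h2, if_pos hit]
      simp
    rw [this]
    norm_num

end Inj

theorem card_LamNK (β₁ β₂ : ℝ) (h1 : 1 < β₁) (h12 : β₁ < β₂) (n k : ℕ)
    (hk : 1 ≤ k) (hkn : k < n) :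
    letI S : Set (Fin n → ℕ) :=
      {ω | ω ∈ LamN β₁ β₂ n ∧ ∀ j, tW ω ≤ j → j < tW ω + k → pad ω j = 0}
    S.Finite ∧ (S.ncard : ℝ) ≤ β₂ ^ (n - k + 1) / (β₂ - 1) := by
  set S : Set (Fin n → ℕ) :=
    {ω | ω ∈ LamN β₁ β₂ n ∧ ∀ j, tW ω ≤ j → j < tW ω + k → pad ω j = 0} with hS
  have hβ₂ : 1 < β₂ := h1.trans h12
  have hDfin : (Dset β₂ (n - k)).Finite := Dset_finite hβ₂
  -- the squeeze map sends S into Dset and is injective on S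
  have hmaps : ∀ ω ∈ S, sqz n k ω ∈ Dset β₂ (n - k) := by
    rintro ω ⟨⟨β, hβ1, hβ2, hd⟩, hz⟩
    exact sqz_mem (h1.trans hβ1) hβ2 hk hkn ω hd
  have hinj : Set.InjOn (sqz n k) S := by
    rintro ω ⟨⟨β, hβ1, hβ2, hd⟩, hz⟩ ϖ ⟨⟨β', hβ1', hβ2', hd'⟩, hz'⟩ heq
    have hβ : 1 < β := h1.trans hβ1
    have hβ' : 1 < β' := h1.trans hβ1'
    have hn : 0 < n := by omega
    rcases le_total (tW ω) (tW ϖ) with hle | hle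
    · exact sqz_inj_aux hk hkn ω ϖ (selfAdmissible_of_digits hβ ω hd)
        (selfAdmissible_of_digits hβ' ϖ hd') (pad_zero_ne hβ hn ω hd)
        (pad_zero_ne hβ' hn ϖ hd') hz hz' heq hle
    · exact (sqz_inj_aux hk hkn ϖ ω (selfAdmissible_of_digits hβ' ϖ hd')
        (selfAdmissible_of_digits hβ ω hd) (pad_zero_ne hβ' hn ϖ hd')
        (pad_zero_ne hβ hn ω hd) hz' hz heq.symm hle).symm
  have hSfin : S.Finite := by
    refine Set.Finite.of_finite_image (hDfin.subset ?_) hinj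
    rintro u ⟨ω, hω, rfl⟩; exact hmaps ω hω
  refine ⟨hSfin, ?_⟩
  have hcard : S.ncard ≤ (Dset β₂ (n - k)).ncard :=
    Set.ncard_le_ncard_of_injOn _ hmaps hinj hDfin
  have h2 : ((Dset β₂ (n - k)).ncard : ℝ) ≤ ∑ i ∈ Finset.range (n - k + 1), β₂ ^ i :=
    Dset_card hβ₂ (n - k)
  have h3 : ∑ i ∈ Finset.range (n - k + 1), β₂ ^ i ≤ β₂ ^ (n - k + 1) / (β₂ - 1) := by
    rw [geom_sum_eq (ne_of_gt hβ₂)]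
    have hb : 0 < β₂ - 1 := by linarith
    rw [div_le_div_iff_of_pos_right hb]
    linarith
  calc (S.ncard : ℝ) ≤ ((Dset β₂ (n - k)).ncard : ℝ) := by exact_mod_cast hcard
    _ ≤ _ := h2
    _ ≤ _ := h3
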